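/- Let g be a derivator with g^C = 0 whose discontinuity set D_g consists of isolated points. Then for x > x₀ and n ∈ ℕ, g_n(x)/n! = Σ over all n-element subsets S of D_g ∩ [x₀,x) of Π_{y∈S} Δg(y); in particular g_n(x) = 0 whenever |D_g ∩ [x₀,x)| < n. For x < x₀, g_n(x)/n! = (−1)^n Σ over functions σ : D_g ∩ [x,x₀) → {0,…,n} with Σσ(y) = n of Π_y Δg(y)^{σ(y)}. -/

import Mathlib

section AuxComb
open Finset

variable {α R : Type*} [CommSemiring R] [DecidableEq α]

lemma esymm_rec (w : α → R) {a : α} {s : Finset α} (ha : a ∉ s) (n : ℕ) :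
    ∑ S ∈ (insert a s).powersetCard (n+1), ∏ y ∈ S, w y =
      (∑ S ∈ s.powersetCard (n+1), ∏ y ∈ S, w y) + w a * ∑ S ∈ s.powersetCard n, ∏ y ∈ S, w y := by
  rw [powersetCard_succ_insert ha, sum_union, sum_image, mul_sum]
  · congr 1
    refine sum_congr rfl fun S hS => ?_
    have haS : a ∉ S := fun h => ha ((mem_powersetCard.1 hS).1 h)
    rw [prod_insert haS]
  · intro S hS T hT hST
    have haS : a ∉ S := fun h => ha ((mem_powersetCard.1 hS).1 h)
    have haT : a ∉ T := fun h => ha ((mem_powersetCard.1 hT).1 h)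
    have := congrArg (Finset.erase · a) hST
    simpa [erase_insert haS, erase_insert haT] using this
  · rw [disjoint_right]
    rintro S hS hS'
    obtain ⟨T, hT, rfl⟩ := mem_image.1 hS
    exact ha ((mem_powersetCard.1 hS').1 (mem_insert_self a T))

lemma lemA [LinearOrder α] (w : α → R) (F : Finset α) (n : ℕ) :
    ∑ S ∈ F.powersetCard (n+1), ∏ y ∈ S, w y =
      ∑ y ∈ F, w y * ∑ S ∈ (F.filter (· < y)).powersetCard n, ∏ z ∈ S, w z := by
  induction F using Finset.induction_on_max with
  | empty => rw [Finset.powersetCard_eq_empty.2 (by simp)]; simp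
  | insert a s hmax ih =>
    have ha : a ∉ s := fun h => lt_irrefl a (hmax a h)
    rw [esymm_rec w ha, sum_insert ha, ih]
    have h1 : (insert a s).filter (· < a) = s := by
      ext z; simp only [mem_filter, mem_insert]
      constructor
      · rintro ⟨(rfl | hz), hlt⟩
        · exact absurd hlt (lt_irrefl _)
        · exact hz
      · exact fun hz => ⟨Or.inr hz, hmax z hz⟩
    have h2 : ∀ y ∈ s, (insert a s).filter (· < y) = s.filter (· < y) := by
      intro y hy
      ext z; simp only [mem_filter, mem_insert]
      constructor
      · rintro ⟨(rfl | hz), hlt⟩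
        · exact absurd ((hmax y hy).trans hlt) (lt_irrefl _)
        · exact ⟨hz, hlt⟩
      · exact fun ⟨hz, hlt⟩ => ⟨Or.inr hz, hlt⟩
    have h3 : ∑ y ∈ s, w y * ∑ S ∈ ((insert a s).filter (· < y)).powersetCard n, ∏ z ∈ S, w z
        = ∑ y ∈ s, w y * ∑ S ∈ (s.filter (· < y)).powersetCard n, ∏ z ∈ S, w z :=
      sum_congr rfl fun y hy => by rw [h2 y hy]
    rw [h1, h3]
    ring

lemma hsym_rec (w : α → R) {a : α} {s : Finset α} (ha : a ∉ s) (m : ℕ) :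
    ∑ σ ∈ piAntidiag (insert a s) m, ∏ y ∈ insert a s, w y ^ σ y
      = ∑ p ∈ Finset.HasAntidiagonal.antidiagonal m, w a ^ p.1 * ∑ σ ∈ piAntidiag s p.2, ∏ y ∈ s, w y ^ σ y := by
  rw [← Finset.cons_eq_insert a s ha, piAntidiag_cons ha, sum_disjiUnion]
  refine sum_congr rfl fun p hp => ?_
  rw [sum_map, mul_sum]
  refine sum_congr rfl fun g hg => ?_
  obtain ⟨hsum, hsupp⟩ := mem_piAntidiag.1 hg
  have hga : g a = 0 := by
    by_contra h
    exact ha (hsupp a h)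
  rw [prod_cons]
  simp only [addRightEmbedding_apply]
  have hea : (g + fun t => if t = a then p.1 else 0) a = p.1 := by simp [hga]
  rw [hea]
  congr 1
  refine prod_congr rfl fun y hy => ?_
  have hya : y ≠ a := fun h => ha (h ▸ hy)
  simp [hya]

lemma lemB [LinearOrder α] (w : α → R) (F : Finset α) :
    ∀ n : ℕ, ∑ σ ∈ piAntidiag F (n+1), ∏ y ∈ F, w y ^ σ y =
      ∑ y ∈ F, w y * ∑ σ ∈ piAntidiag (F.filter (y ≤ ·)) n, ∏ z ∈ F.filter (y ≤ ·), w z ^ σ z := by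
  induction F using Finset.induction_on_min with
  | empty => intro n; simp
  | insert a s hmin ih =>
    intro n
    have ha : a ∉ s := fun h => lt_irrefl a (hmin a h)
    have h1 : (insert a s).filter (a ≤ ·) = insert a s := by
      refine filter_true_of_mem fun z hz => ?_
      rcases mem_insert.1 hz with rfl | hz
      · exact le_rfl
      · exact (hmin z hz).le
    have h2 : ∀ y ∈ s, (insert a s).filter (y ≤ ·) = s.filter (y ≤ ·) := by
      intro y hy
      ext z; simp only [mem_filter, mem_insert]
      constructor
      · rintro ⟨(rfl | hz), hle⟩
        · exact absurd (hle.trans_lt (hmin y hy)) (lt_irrefl _)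
        · exact ⟨hz, hle⟩
      · exact fun ⟨hz, hle⟩ => ⟨Or.inr hz, hle⟩
    rw [sum_insert ha, h1]
    have h3 : ∑ y ∈ s, w y * ∑ σ ∈ piAntidiag ((insert a s).filter (y ≤ ·)) n,
          ∏ z ∈ (insert a s).filter (y ≤ ·), w z ^ σ z
        = ∑ y ∈ s, w y * ∑ σ ∈ piAntidiag (s.filter (y ≤ ·)) n, ∏ z ∈ s.filter (y ≤ ·), w z ^ σ z :=
      sum_congr rfl fun y hy => by rw [h2 y hy]
    rw [h3, ← ih n, hsym_rec w ha (n+1), hsym_rec w ha n, Finset.Nat.antidiagonal_succ, sum_cons,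
      sum_map, mul_sum]
    simp only [Function.Embedding.coe_prodMap, Function.Embedding.coeFn_mk,
      Function.Embedding.refl_apply, Prod.map_fst, Prod.map_snd, pow_zero, one_mul, pow_succ]
    rw [add_comm]
    congr 1
    rw [mul_sum]
    exact sum_congr rfl fun p hp => by ring

end AuxComb

section AuxMeas
open MeasureTheory Set Finset

lemma key_integral (μ : Measure ℝ) (J G : ℝ → ℝ)
    (hμ : ∀ a b : ℝ, a ≤ b → μ (Set.Ico a b) = ENNReal.ofReal (G b - G a))
    (hfin : ∀ a b : ℝ, ({y : ℝ | 0 < J y} ∩ Set.Ico a b).Finite)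
    (hpure : ∀ a b : ℝ, a ≤ b → G b - G a = ∑ y ∈ (hfin a b).toFinset, J y)
    (a b : ℝ) (hab : a ≤ b) (f : ℝ → ℝ) :
    ∫ s in Set.Ico a b, f s ∂μ = ∑ y ∈ (hfin a b).toFinset, f y * J y := by
  classical
  set F := (hfin a b).toFinset with hF
  have hFmem : ∀ y, y ∈ F ↔ 0 < J y ∧ y ∈ Set.Ico a b := by
    intro y; rw [hF, Set.Finite.mem_toFinset]; exact Iff.rfl
  set ν : Measure ℝ := ∑ y ∈ F, (ENNReal.ofReal (J y)) • Measure.dirac y with hν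
  have hνapp : ∀ s : Set ℝ, ν s = ∑ y ∈ F, Set.indicator s (fun y => ENNReal.ofReal (J y)) y := by
    intro s
    rw [hν, Measure.finset_sum_apply]
    refine Finset.sum_congr rfl fun y hy => ?_
    rw [Measure.smul_apply, Measure.dirac_apply, smul_eq_mul]
    by_cases h : y ∈ s
    · simp [h]
    · simp [h]
  have hres : μ.restrict (Set.Ico a b) = ν := by
    have hfm : IsFiniteMeasure (μ.restrict (Set.Ico a b)) := by
      constructor
      rw [Measure.restrict_apply_univ, hμ a b hab]
      exact ENNReal.ofReal_lt_top
    refine Measure.ext_of_Ico_finite _ _ ?_ ?_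
    · rw [Measure.restrict_apply_univ, hμ a b hab, hpure a b hab, hνapp,
        ENNReal.ofReal_sum_of_nonneg (fun y hy => ((hFmem y).1 hy).1.le)]
      refine Finset.sum_congr rfl fun y hy => ?_
      simp [Set.indicator_of_mem (Set.mem_univ y)]
    · intro c d hcd
      rw [Measure.restrict_apply measurableSet_Ico, Set.Ico_inter_Ico, hνapp]
      rcases le_or_gt (c ⊔ a) (d ⊓ b) with h | h
      · rw [hμ _ _ h, hpure _ _ h,
          ENNReal.ofReal_sum_of_nonneg (fun y hy => ((hfin _ _).mem_toFinset.1 hy).1.le)]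
        set F' := (hfin (c ⊔ a) (d ⊓ b)).toFinset with hF'
        have hF'mem : ∀ y, y ∈ F' ↔ 0 < J y ∧ y ∈ Set.Ico (c ⊔ a) (d ⊓ b) := by
          intro y; rw [hF', Set.Finite.mem_toFinset]; exact Iff.rfl
        have hsub : F' ⊆ F := by
          intro y hy
          obtain ⟨h1, h2⟩ := (hF'mem y).1 hy
          exact (hFmem y).2 ⟨h1, ⟨le_trans le_sup_right h2.1, lt_of_lt_of_le h2.2 inf_le_right⟩⟩
        rw [← Finset.sum_subset hsub]
        · exact (Finset.sum_congr rfl fun y hy => by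
            obtain ⟨h1, h2⟩ := (hF'mem y).1 hy
            rw [Set.indicator_of_mem (Set.mem_Ico.2 ⟨le_trans le_sup_left h2.1, lt_of_lt_of_le h2.2 inf_le_left⟩)])
        · intro y hyF hyF'
          rw [Set.indicator_of_notMem]
          intro hy
          obtain ⟨h1, h2⟩ := (hFmem y).1 hyF
          exact hyF' ((hF'mem y).2 ⟨h1, ⟨sup_le hy.1 h2.1, lt_min hy.2 h2.2⟩⟩)
      · rw [Set.Ico_eq_empty (lt_asymm h), measure_empty]
        symm
        refine Finset.sum_eq_zero fun y hy => ?_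
        rw [Set.indicator_of_notMem]
        intro hycd
        obtain ⟨h1, h2⟩ := (hFmem y).1 hy
        exact lt_irrefl _ (lt_trans (lt_of_le_of_lt (sup_le hycd.1 h2.1) (lt_min hycd.2 h2.2)) h)
  have hint : ∀ y ∈ F, Integrable f ((ENNReal.ofReal (J y)) • Measure.dirac y) := by
    intro y hy
    have hpos := ((hFmem y).1 hy).1
    have hae : f =ᵐ[Measure.dirac y] fun _ => f y := by
      rw [MeasureTheory.ae_dirac_eq]; exact Filter.eventually_pure.2 rfl
    rw [integrable_smul_measure (fun h0 => absurd (ENNReal.ofReal_eq_zero.1 h0) hpos.not_ge) ENNReal.ofReal_ne_top]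
    exact (integrable_congr hae).2 (integrable_const (f y))
  calc ∫ s in Set.Ico a b, f s ∂μ = ∫ s, f s ∂ν := by rw [hres]
    _ = ∑ y ∈ F, ∫ s, f s ∂((ENNReal.ofReal (J y)) • Measure.dirac y) := by
        rw [hν, integral_finset_sum_measure hint]
    _ = ∑ y ∈ F, f y * J y := by
        refine Finset.sum_congr rfl fun y hy => ?_
        have hpos := ((hFmem y).1 hy).1
        rw [integral_smul_measure, integral_dirac, ENNReal.toReal_ofReal hpos.le, smul_eq_mul,
          mul_comm]

end AuxMeas


open MeasureTheory Set Finset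

/-- The jump of `g` at `x`: `Δg(x) = g(x⁺) − g(x)`. -/
noncomputable def jumpOf (g : ℝ → ℝ) (x : ℝ) : ℝ := Function.rightLim g x - g x

/-- Oriented Lebesgue–Stieltjes integral: `∫_a^b f dμ = ∫_{[a,b)} f dμ` if `a ≤ b`,
`= −∫_{[b,a)} f dμ` otherwise. -/
noncomputable def ointeg (μ : MeasureTheory.Measure ℝ) (f : ℝ → ℝ) (a b : ℝ) : ℝ :=
  if a ≤ b then ∫ s in Set.Ico a b, f s ∂μ else - ∫ s in Set.Ico b a, f s ∂μ

/-- The `g`-monomials centered at `c`, defined from the Lebesgue–Stieltjes measure `μ` of `g`: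
`g_0 ≡ 1`, `g_{n+1}(x) = (n+1) ∫_c^x g_n dμ` (oriented). -/
noncomputable def gMon (μ : MeasureTheory.Measure ℝ) (c : ℝ) : ℕ → ℝ → ℝ
  | 0 => fun _ => 1
  | n + 1 => fun x => ((n : ℝ) + 1) * ointeg μ (gMon μ c n) c x


/-- Explicit `g`-monomials for a purely atomic derivator (`g^C = 0`) whose jump set
`D_g = {y : 0 < Δg y}` is a set of isolated points (hence finite on bounded intervals).
For `x > x₀`: `g_n(x)/n! = Σ_{S ⊆ D_g∩[x₀,x), |S| = n} Π_{y∈S} Δg(y)`, so `g_n(x) = 0`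
whenever `|D_g∩[x₀,x)| < n`. For `x < x₀`:
`g_n(x)/n! = (−1)^n Σ_{σ : D_g∩[x,x₀) → ℕ, Σσ = n} Π_y Δg(y)^{σ(y)}`. -/
theorem stmt9 (g : ℝ → ℝ) (μ : MeasureTheory.Measure ℝ) (x₀ : ℝ)
    (hg : Monotone g) (hlc : ∀ x : ℝ, ContinuousWithinAt g (Set.Iio x) x)
    (hμ : ∀ a b : ℝ, a ≤ b → μ (Set.Ico a b) = ENNReal.ofReal (g b - g a))
    (hiso : ∀ y : ℝ, 0 < jumpOf g y →
      ∃ ε > (0 : ℝ), ∀ z ∈ Set.Ioo (y - ε) (y + ε), 0 < jumpOf g z → z = y)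
    (hfin : ∀ a b : ℝ, ({y : ℝ | 0 < jumpOf g y} ∩ Set.Ico a b).Finite)
    (hpure : ∀ a b : ℝ, a ≤ b → g b - g a = ∑ y ∈ (hfin a b).toFinset, jumpOf g y) :
    (∀ x : ℝ, x₀ < x → ∀ n : ℕ,
      gMon μ x₀ n x / (Nat.factorial n : ℝ) =
        ∑ S ∈ (hfin x₀ x).toFinset.powersetCard n, ∏ y ∈ S, jumpOf g y) ∧
    (∀ x : ℝ, x₀ < x → ∀ n : ℕ, (hfin x₀ x).toFinset.card < n → gMon μ x₀ n x = 0) ∧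
    (∀ x : ℝ, x < x₀ → ∀ n : ℕ,
      gMon μ x₀ n x / (Nat.factorial n : ℝ) =
        (-1) ^ n * ∑ σ ∈ Finset.piAntidiag (hfin x x₀).toFinset n,
          ∏ y ∈ (hfin x x₀).toFinset, jumpOf g y ^ σ y) := by
  classical
  have key := key_integral μ (jumpOf g) g hμ hfin hpure
  have main : ∀ n : ℕ,
      (∀ x : ℝ, x₀ ≤ x → gMon μ x₀ n x = (Nat.factorial n : ℝ) *
        ∑ S ∈ (hfin x₀ x).toFinset.powersetCard n, ∏ y ∈ S, jumpOf g y) ∧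
      (∀ x : ℝ, x < x₀ → gMon μ x₀ n x = (Nat.factorial n : ℝ) * (-1) ^ n *
        ∑ σ ∈ Finset.piAntidiag (hfin x x₀).toFinset n,
          ∏ y ∈ (hfin x x₀).toFinset, jumpOf g y ^ σ y) := by
    intro n
    induction n with
    | zero =>
      constructor
      · intro x hx; simp [gMon, Finset.powersetCard_zero]
      · intro x hx; simp [gMon]
    | succ n ih =>
      constructor
      · intro x hx
        show ((n : ℝ) + 1) * ointeg μ (gMon μ x₀ n) x₀ x = _
        unfold ointeg
        rw [if_pos hx, key x₀ x hx (gMon μ x₀ n)]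
        have hstep : ∀ y ∈ (hfin x₀ x).toFinset, gMon μ x₀ n y * jumpOf g y
            = (Nat.factorial n : ℝ) * (jumpOf g y *
              ∑ S ∈ (((hfin x₀ x).toFinset).filter (· < y)).powersetCard n,
                ∏ z ∈ S, jumpOf g z) := by
          intro y hy
          obtain ⟨h1, h2⟩ := (hfin x₀ x).mem_toFinset.1 hy
          have hFeq : (hfin x₀ y).toFinset = ((hfin x₀ x).toFinset).filter (· < y) := by
            ext z
            simp only [Set.Finite.mem_toFinset, Set.mem_inter_iff, Set.mem_setOf_eq,
              Set.mem_Ico, Finset.mem_filter]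
            constructor
            · rintro ⟨hz1, hz2, hz3⟩
              exact ⟨⟨hz1, hz2, hz3.trans h2.2⟩, hz3⟩
            · rintro ⟨⟨hz1, hz2, _⟩, hz3⟩
              exact ⟨hz1, hz2, hz3⟩
          rw [ih.1 y h2.1, hFeq]
          ring
        rw [Finset.sum_congr rfl hstep, lemA (jumpOf g) ((hfin x₀ x).toFinset) n,
          ← Finset.mul_sum, Nat.factorial_succ]
        push_cast
        ring
      · intro x hx
        show ((n : ℝ) + 1) * ointeg μ (gMon μ x₀ n) x₀ x = _
        unfold ointeg
        rw [if_neg (not_le.2 hx), key x x₀ hx.le (gMon μ x₀ n)]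
        have hstep : ∀ y ∈ (hfin x x₀).toFinset, gMon μ x₀ n y * jumpOf g y
            = ((Nat.factorial n : ℝ) * (-1) ^ n) * (jumpOf g y *
              ∑ σ ∈ Finset.piAntidiag (((hfin x x₀).toFinset).filter (y ≤ ·)) n,
                ∏ z ∈ ((hfin x x₀).toFinset).filter (y ≤ ·), jumpOf g z ^ σ z) := by
          intro y hy
          obtain ⟨h1, h2⟩ := (hfin x x₀).mem_toFinset.1 hy
          have hFeq : (hfin y x₀).toFinset = ((hfin x x₀).toFinset).filter (y ≤ ·) := by
            ext z
            simp only [Set.Finite.mem_toFinset, Set.mem_inter_iff, Set.mem_setOf_eq,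
              Set.mem_Ico, Finset.mem_filter]
            constructor
            · rintro ⟨hz1, hz2, hz3⟩
              exact ⟨⟨hz1, h2.1.trans hz2, hz3⟩, hz2⟩
            · rintro ⟨⟨hz1, _, hz3⟩, hz2⟩
              exact ⟨hz1, hz2, hz3⟩
          rw [ih.2 y h2.2, hFeq]
          ring
        rw [Finset.sum_congr rfl hstep, ← Finset.mul_sum,
          lemB (jumpOf g) ((hfin x x₀).toFinset) n, Nat.factorial_succ]
        push_cast
        ring
  have hfne : ∀ n : ℕ, (Nat.factorial n : ℝ) ≠ 0 :=
    fun n => Nat.cast_ne_zero.2 n.factorial_ne_zero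
  refine ⟨fun x hx n => ?_, fun x hx n hcard => ?_, fun x hx n => ?_⟩
  · rw [(main n).1 x hx.le, mul_div_cancel_left₀ _ (hfne n)]
  · rw [(main n).1 x hx.le, Finset.powersetCard_eq_empty.2 hcard]
    simp
  · rw [(main n).2 x hx, mul_assoc, mul_div_cancel_left₀ _ (hfne n)]
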